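/- Let G be a group and N a normal subgroup such that the projection q : G → G/N admits a section homomorphism s : G/N → G. Then for every x ∈ [G,N]: cl_G(x) ≤ cl_{G,N}(x) ≤ 3·cl_G(x). -/

import Mathlib

variable {G : Type*} [Group G]

/-- `x` is a product of `m` `(G,N)`-commutators. -/
def IsCommProd (N : Subgroup G) (m : ℕ) (x : G) : Prop :=
  ∃ c : Fin m → G, (∀ i, ∃ g h : G, h ∈ N ∧ c i = g * h * g⁻¹ * h⁻¹) ∧
    (List.ofFn c).prod = x

/-- The `(G,N)`-commutator length; for `N = ⊤` this is the ordinary commutator length. -/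
noncomputable def clGN (N : Subgroup G) (x : G) : ℕ :=
  sInf {m | IsCommProd N m x}

namespace ClAux

/-- `y` is a single `(G,N)`-commutator. -/
def GNc (N : Subgroup G) (y : G) : Prop := ∃ g h : G, h ∈ N ∧ y = g * h * g⁻¹ * h⁻¹

lemma gnc_conj {N : Subgroup G} [N.Normal] {y : G} (k : G) (h : GNc N y) :
    GNc N (k * y * k⁻¹) := by
  obtain ⟨g, n, hn, rfl⟩ := h
  exact ⟨k * g * k⁻¹, k * n * k⁻¹, Subgroup.Normal.conj_mem ‹N.Normal› n hn k, by group⟩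

lemma isCommProd_iff_list {N : Subgroup G} {m : ℕ} {x : G} :
    IsCommProd N m x ↔
      ∃ l : List G, l.length = m ∧ (∀ y ∈ l, GNc N y) ∧ l.prod = x := by
  constructor
  · rintro ⟨c, hc, hprod⟩
    refine ⟨List.ofFn c, List.length_ofFn, ?_, hprod⟩
    intro y hy
    obtain ⟨i, rfl⟩ := List.mem_ofFn.mp hy
    exact hc i
  · rintro ⟨l, rfl, hl, rfl⟩
    refine ⟨l.get, fun i => hl _ (l.get_mem i), ?_⟩
    rw [List.ofFn_get]

open scoped commutatorElement in
lemma mem_commutator_isCommProd {N : Subgroup G} [N.Normal] {x : G}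
    (hx : x ∈ ⁅(⊤ : Subgroup G), N⁆) : ∃ m, IsCommProd N m x := by
  have h : x ∈ Subgroup.closure {y | ∃ g ∈ (⊤ : Subgroup G), ∃ h ∈ N, ⁅g, h⁆ = y} := by
    rwa [Subgroup.commutator_def] at hx
  refine Subgroup.closure_induction ?_ ?_ ?_ ?_ h
  · rintro y ⟨g, -, n, hn, rfl⟩
    refine ⟨1, isCommProd_iff_list.mpr ⟨[⁅g, n⁆], rfl, ?_, mul_one _⟩⟩
    rintro z hz
    simp only [List.mem_singleton] at hz
    subst hz
    exact ⟨g, n, hn, commutatorElement_def g n⟩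
  · exact ⟨0, isCommProd_iff_list.mpr ⟨[], rfl, by simp, rfl⟩⟩
  · rintro a b - - ⟨ma, ha⟩ ⟨mb, hb⟩
    obtain ⟨la, hla, hamem, hap⟩ := isCommProd_iff_list.mp ha
    obtain ⟨lb, hlb, hbmem, hbp⟩ := isCommProd_iff_list.mp hb
    refine ⟨ma + mb, isCommProd_iff_list.mpr ⟨la ++ lb, ?_, ?_, ?_⟩⟩
    · simp [hla, hlb]
    · intro y hy
      rcases List.mem_append.mp hy with h | h
      · exact hamem y h
      · exact hbmem y h
    · simp [hap, hbp]
  · rintro a - ⟨m, ha⟩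
    obtain ⟨l, hl, hmem, hp⟩ := isCommProd_iff_list.mp ha
    refine ⟨m, isCommProd_iff_list.mpr ⟨(l.map fun y => y⁻¹).reverse, ?_, ?_, ?_⟩⟩
    · simp [hl]
    · intro y hy
      simp only [List.mem_reverse, List.mem_map] at hy
      obtain ⟨z, hz, rfl⟩ := hy
      obtain ⟨g, n, hn, rfl⟩ := hmem z hz
      exact ⟨g⁻¹, g * n * g⁻¹, Subgroup.Normal.conj_mem ‹N.Normal› n hn g, by group⟩
    · rw [← List.prod_inv_reverse, hp]

lemma prod_map_conj (k : G) (l : List G) :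
    (l.map fun y => k * y * k⁻¹).prod = k * l.prod * k⁻¹ := by
  induction l with
  | nil => simp
  | cons a t ih => simp only [List.map_cons, List.prod_cons, ih]; group

lemma key (N : Subgroup G) [N.Normal] (s : G ⧸ N →* G)
    (hs : ∀ q : G ⧸ N, QuotientGroup.mk' N (s q) = q) :
    ∀ l : List G, (∀ y ∈ l, ∃ a b : G, y = a * b * a⁻¹ * b⁻¹) →
      ∃ l' : List G, l'.length = 2 * l.length ∧ (∀ y ∈ l', GNc N y) ∧
        l'.prod = l.prod * (s (QuotientGroup.mk' N l.prod))⁻¹ := by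
  intro l
  induction l with
  | nil => exact fun _ => ⟨[], rfl, by simp, by simp⟩
  | cons c t ih =>
    intro hmem
    obtain ⟨a, b, hc⟩ := hmem c (List.mem_cons_self)
    obtain ⟨l'', hlen'', hmem'', hp''⟩ := ih fun y hy => hmem y (List.mem_cons_of_mem c hy)
    set a' : G := s (QuotientGroup.mk' N a) with ha'
    set b' : G := s (QuotientGroup.mk' N b) with hb'
    have hnN : a'⁻¹ * a ∈ N := by
      have h1 : QuotientGroup.mk' N (a'⁻¹ * a) = 1 := by
        simp [map_mul, map_inv, ha', hs]
      exact (QuotientGroup.eq_one_iff _).mp h1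
    have hmN : b'⁻¹ * b ∈ N := by
      have h1 : QuotientGroup.mk' N (b'⁻¹ * b) = 1 := by
        simp [map_mul, map_inv, hb', hs]
      exact (QuotientGroup.eq_one_iff _).mp h1
    set n : G := a'⁻¹ * a with hn
    set m : G := b'⁻¹ * b with hm
    set σ : G := a' * b' * a'⁻¹ * b'⁻¹ with hσ
    have hσeq : σ = s (QuotientGroup.mk' N c) := by
      rw [hc]
      simp [hσ, ha', hb']
    set c1 : G := a' * (n * b * n⁻¹ * b⁻¹) * a'⁻¹ with hc1
    set c2 : G := b' * (a' * m * a'⁻¹ * m⁻¹) * b'⁻¹ with hc2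
    have hdecomp : c = c1 * σ * c2 := by
      have ha'' : a = a' * n := by rw [hn]; group
      have hb'' : b = b' * m := by rw [hm]; group
      rw [hc, hc1, hc2, hσ, hn, hm]
      group
    have hgc1 : GNc N c1 := by
      refine gnc_conj a' ?_
      exact ⟨b⁻¹, b * n * b⁻¹, Subgroup.Normal.conj_mem ‹N.Normal› n hnN b, by group⟩
    have hgc2 : GNc N c2 := gnc_conj b' ⟨a', m, hmN, rfl⟩
    refine ⟨c1 :: (σ * c2 * σ⁻¹) :: (l''.map fun y => σ * y * σ⁻¹), ?_, ?_, ?_⟩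
    · simp only [List.length_cons, List.length_map, hlen'']; ring
    · intro y hy
      rcases List.mem_cons.mp hy with rfl | hy
      · exact hgc1
      rcases List.mem_cons.mp hy with rfl | hy
      · exact gnc_conj σ hgc2
      obtain ⟨z, hz, rfl⟩ := List.mem_map.mp hy
      exact gnc_conj σ (hmem'' z hz)
    · rw [List.prod_cons, List.prod_cons, prod_map_conj, hp'', List.prod_cons]
      have hq : s (QuotientGroup.mk' N (c * t.prod))
          = σ * s (QuotientGroup.mk' N t.prod) := by
        rw [map_mul, map_mul, hσeq]
      rw [hq, hdecomp]
      group

end ClAux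

open ClAux in
/-- If the projection `G → G/N` has a homomorphic section, then
`cl_G(x) ≤ cl_{G,N}(x) ≤ 3·cl_G(x)` for every `x ∈ [G,N]`. -/
theorem cl_equivalence_section (N : Subgroup G) [hN : N.Normal]
    (s : G ⧸ N →* G) (hs : ∀ q : G ⧸ N, QuotientGroup.mk' N (s q) = q)
    (x : G) (hx : x ∈ ⁅(⊤ : Subgroup G), N⁆) :
    clGN (⊤ : Subgroup G) x ≤ clGN N x ∧ clGN N x ≤ 3 * clGN (⊤ : Subgroup G) x := by
  obtain ⟨m0, hm0⟩ := mem_commutator_isCommProd hx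
  have hsub : ∀ k, IsCommProd N k x → IsCommProd (⊤ : Subgroup G) k x := by
    rintro k ⟨c, hc, hp⟩
    exact ⟨c, fun i => by obtain ⟨g, h, -, hgh⟩ := hc i; exact ⟨g, h, trivial, hgh⟩, hp⟩
  have hNne : {k | IsCommProd N k x}.Nonempty := ⟨m0, hm0⟩
  have hTne : {k | IsCommProd (⊤ : Subgroup G) k x}.Nonempty := ⟨m0, hsub m0 hm0⟩
  constructor
  · exact Nat.sInf_le (hsub _ (Nat.sInf_mem hNne))
  · have hmem : IsCommProd (⊤ : Subgroup G) (clGN ⊤ x) x := Nat.sInf_mem hTne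
    obtain ⟨l, hlen, hl, hp⟩ := isCommProd_iff_list.mp hmem
    have hl' : ∀ y ∈ l, ∃ a b : G, y = a * b * a⁻¹ * b⁻¹ := by
      intro y hy
      obtain ⟨g, h, -, hgh⟩ := hl y hy
      exact ⟨g, h, hgh⟩
    obtain ⟨l', hlen', hmem', hp'⟩ := key N s hs l hl'
    have hxN : x ∈ N := Subgroup.commutator_le_right ⊤ N hx
    have hqx : QuotientGroup.mk' N l.prod = 1 := by
      rw [hp]
      exact (QuotientGroup.eq_one_iff x).mpr hxN
    have h2 : IsCommProd N (2 * clGN ⊤ x) x := by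
      refine isCommProd_iff_list.mpr ⟨l', by rw [hlen', hlen], hmem', ?_⟩
      rw [hp', hqx, map_one, inv_one, mul_one, hp]
    calc clGN N x ≤ 2 * clGN ⊤ x := Nat.sInf_le h2
      _ ≤ 3 * clGN ⊤ x := Nat.mul_le_mul_right _ (by norm_num)
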